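/- Let OSym_{n+1} be the algebra of odd symmetric polynomials in x_1,…,x_{n+1}. For any 0 ≤ p,q,k ≤ n with p+q ≤ n, one has Σ_{m=1}^{n-p-q} (-1)^{(n+k)(m+p+k)} e_{n-k+m}^{(n+1)} e_{n-p-q-m}^{(n+1)} = Σ_{m=1}^{n-p-q} (-1)^{(n+k)(m+q)} e_{n-p-q-m}^{(n+1)} e_{n-k+m}^{(n+1)}. -/

import Mathlib

noncomputable section

/-- The odd elementary symmetric polynomial
`e_r = ∑_{i_1 < ⋯ < i_r} x_{i_1} ⋯ x_{i_r}` in the (odd, anticommuting)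
variables `x`. -/
def oddElem {A : Type*} [Ring A] {N : ℕ} (x : Fin N → A) (r : ℕ) : A :=
  ∑ s ∈ Finset.powersetCard r (Finset.univ : Finset (Fin N)),
    ((s.sort (· ≤ ·)).map x).prod

section aux

variable {A : Type*} [Ring A]


def listE : List A → ℕ → A
  | _, 0 => 1
  | [], _+1 => 0
  | a :: l, r+1 => a * listE l r + listE l (r+1)

@[simp] lemma listE_zero (l : List A) : listE l 0 = 1 := by cases l <;> rfl
@[simp] lemma listE_nil_succ (r : ℕ) : listE ([] : List A) (r+1) = 0 := rfl
lemma listE_cons (a : A) (l : List A) (r : ℕ) :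
    listE (a :: l) (r+1) = a * listE l r + listE l (r+1) := rfl

lemma mul_neg_one_pow (u w : A) (j : ℕ) : u * ((-1:A)^j * w) = (-1:A)^j * (u * w) := by
  rcases Nat.even_or_odd j with h | h
  · simp [h.neg_one_pow]
  · simp [h.neg_one_pow]

lemma listE_mul_right (a : A) :
    ∀ (l : List A), (∀ b ∈ l, b * a = -(a * b)) → ∀ j, listE l j * a = (-1:A)^j * (a * listE l j)
  | l, _, 0 => by simp
  | [], _, (j+1) => by simp
  | b :: l, h, (j+1) => by
      have hb : b * a = -(a * b) := h b List.mem_cons_self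
      have hl : ∀ c ∈ l, c * a = -(a * c) := fun c hc => h c (List.mem_cons_of_mem b hc)
      rw [listE_cons, add_mul, mul_assoc, listE_mul_right a l hl j,
        listE_mul_right a l hl (j+1), mul_neg_one_pow,
        show b * (a * listE l j) = -(a * (b * listE l j)) from by
          rw [← mul_assoc, hb, neg_mul, mul_assoc]]
      rw [pow_succ]
      noncomm_ring

lemma listE_swap (a : A) (l : List A) (h : ∀ b ∈ l, b * a = -(a * b)) (j : ℕ) (z : A) :
    listE l j * (a * z) = (-1:A)^j * (a * (listE l j * z)) := by
  rw [← mul_assoc, listE_mul_right a l h j, mul_assoc, mul_assoc]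

lemma listE_expand (a : A) (l : List A) (h : ∀ b ∈ l, b * a = -(a * b)) (r s : ℕ) :
    listE (a :: l) (r+1) * listE (a :: l) (s+1) =
      (-1:A)^r * (a * (a * (listE l r * listE l s)))
      + a * (listE l r * listE l (s+1))
      + (-1:A)^(r+1) * (a * (listE l (r+1) * listE l s))
      + listE l (r+1) * listE l (s+1) := by
  rw [listE_cons, listE_cons, add_mul, mul_add, mul_add,
    mul_assoc a (listE l r) (a * listE l s), listE_swap a l h r, listE_swap a l h (r+1),
    mul_neg_one_pow, mul_assoc a (listE l r) (listE l (s+1))]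
  noncomm_ring

lemma neg_one_pow_congr_mod {t t' : ℕ} (h : t % 2 = t' % 2) : (-1:A)^t = (-1:A)^t' := by
  rcases Nat.even_or_odd t with he | ho
  · have h2 : Even t' := Nat.even_iff.mpr (by have := Nat.even_iff.mp he; omega)
    rw [he.neg_one_pow, h2.neg_one_pow]
  · have h2 : Odd t' := Nat.odd_iff.mpr (by have := Nat.odd_iff.mp ho; omega)
    rw [ho.neg_one_pow, h2.neg_one_pow]

lemma listE_rel (l : List A) (hpw : l.Pairwise (fun a b => b * a = -(a * b))) :
    ∀ r s : ℕ, r % 2 = s % 2 →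
      (listE l r * listE l s = listE l s * listE l r) ∧
      (listE l r * listE l (s+1) + (-1:A)^r * (listE l (s+1) * listE l r)
        = (-1:A)^r * (listE l (r+1) * listE l s) + listE l s * listE l (r+1)) := by
  induction l with
  | nil =>
    intro r s _
    constructor
    · rcases r with _|r <;> rcases s with _|s <;> simp
    · rcases r with _|r <;> rcases s with _|s <;> simp
  | cons a t ih =>
    rw [List.pairwise_cons] at hpw
    obtain ⟨ha, hp⟩ := hpw
    have EA : ∀ r s : ℕ, r % 2 = s % 2 → listE t r * listE t s = listE t s * listE t r :=
      fun r s h => (ih hp r s h).1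
    have EB : ∀ r s : ℕ, r % 2 = s % 2 →
        listE t r * listE t (s+1) + (-1:A)^r * (listE t (s+1) * listE t r)
          = (-1:A)^r * (listE t (r+1) * listE t s) + listE t s * listE t (r+1) :=
      fun r s h => (ih hp r s h).2
    intro r s hrs
    constructor
    · -- part A
      rcases r with _|r' <;> rcases s with _|s'
      · simp
      · simp
      · simp
      · have hrs' : r' % 2 = s' % 2 := by omega
        rw [listE_expand a t ha r' s', listE_expand a t ha s' r',
          EA r' s' hrs', EA (r'+1) (s'+1) (by omega),
          neg_one_pow_congr_mod (show s' % 2 = r' % 2 by omega),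
          neg_one_pow_congr_mod (show (s'+1) % 2 = (r'+1) % 2 by omega)]
        have hB := EB r' s' hrs'
        have hW : listE t s' * listE t (r'+1)
            = listE t r' * listE t (s'+1) + (-1:A)^r' * (listE t (s'+1) * listE t r')
              - (-1:A)^r' * (listE t (r'+1) * listE t s') := by
          rw [eq_sub_iff_add_eq, add_comm]; exact hB.symm
        rw [hW]
        rcases Nat.even_or_odd r' with h | h <;>
          simp [h.neg_one_pow, pow_succ, mul_add, mul_sub, mul_neg, neg_mul, mul_one] <;>
          abel
    · -- part B
      rcases r with _|r' <;> rcases s with _|s'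
      · simp
      · -- r = 0, s = s'+1 even
        rcases s' with _|s''
        · omega
        · have he : Even s'' := Nat.even_iff.mpr (by omega)
          rw [pow_zero, listE_zero, one_mul, mul_one, one_mul,
            listE_expand a t ha 0 (s''+1), listE_expand a t ha (s''+1) 0,
            listE_cons a t (s''+2)]
          have hB := EB 0 (s''+2) (by omega)
          simp only [pow_zero, listE_zero, one_mul, mul_one] at hB
          have hW : listE t (s''+2) * listE t (0+1)
              = listE t (s''+2+1) + listE t (s''+2+1) - listE t (0+1) * listE t (s''+2) := by
            rw [eq_sub_iff_add_eq, add_comm]; exact hB.symm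
          rw [EA (0+1) (s''+1) (by omega), hW,
            neg_one_pow_congr_mod (show (s''+1) % 2 = 1 % 2 by omega),
            neg_one_pow_congr_mod (show (s''+1+1) % 2 = 0 % 2 by omega)]
          simp only [pow_zero, pow_one, pow_succ, listE_zero, one_mul, mul_one, mul_add,
            mul_sub, mul_neg, neg_mul, neg_neg]
          abel
      · -- r = r'+1 even, s = 0
        rcases r' with _|r''
        · omega
        · have he : Even r'' := Nat.even_iff.mpr (by omega)
          rw [neg_one_pow_congr_mod (show (r''+1+1) % 2 = 0 % 2 by omega), pow_zero,
            listE_zero, one_mul, mul_one, one_mul,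
            listE_expand a t ha (r''+1) 0, listE_expand a t ha 0 (r''+1),
            listE_cons a t (r''+2)]
          have hB := EB 0 (r''+2) (by omega)
          simp only [pow_zero, listE_zero, one_mul, mul_one] at hB
          have hW : listE t (r''+2) * listE t (0+1)
              = listE t (r''+2+1) + listE t (r''+2+1) - listE t (0+1) * listE t (r''+2) := by
            rw [eq_sub_iff_add_eq, add_comm]; exact hB.symm
          rw [EA (r''+1) (0+1) (by omega), hW,
            neg_one_pow_congr_mod (show (r''+1) % 2 = 1 % 2 by omega),
            neg_one_pow_congr_mod (show (r''+1+1) % 2 = 0 % 2 by omega)]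
          simp only [pow_zero, pow_one, pow_succ, listE_zero, one_mul, mul_one, mul_add,
            mul_sub, mul_neg, neg_mul, neg_neg]
          abel
      · -- general case r = r'+1, s = s'+1
        have hrs' : r' % 2 = s' % 2 := by omega
        rw [listE_expand a t ha r' (s'+1), listE_expand a t ha (s'+1) r',
          listE_expand a t ha (r'+1) s', listE_expand a t ha s' (r'+1),
          EA r' (s'+1+1) (by omega), EA s' (r'+1+1) (by omega)]
        have hBa := EB s' r' (by omega)
        rw [neg_one_pow_congr_mod (show s' % 2 = r' % 2 by omega)] at hBa
        have hW1 : listE t s' * listE t (r'+1)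
            = (-1:A)^r' * (listE t (s'+1) * listE t r') + listE t r' * listE t (s'+1)
              - (-1:A)^r' * (listE t (r'+1) * listE t s') := by
          rw [eq_sub_iff_add_eq]; exact hBa
        have hBc := EB (r'+1) (s'+1) (by omega)
        have hW2 : listE t (s'+1) * listE t (r'+1+1)
            = listE t (r'+1) * listE t (s'+1+1)
              + (-1:A)^(r'+1) * (listE t (s'+1+1) * listE t (r'+1))
              - (-1:A)^(r'+1) * (listE t (r'+1+1) * listE t (s'+1)) := by
          rw [eq_sub_iff_add_eq, add_comm]; exact hBc.symm
        rw [hW1, hW2,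
          neg_one_pow_congr_mod (show s' % 2 = r' % 2 by omega),
          neg_one_pow_congr_mod (show (s'+1) % 2 = (r'+1) % 2 by omega),
          neg_one_pow_congr_mod (show (s'+1+1) % 2 = r' % 2 by omega),
          neg_one_pow_congr_mod (show (r'+1+1) % 2 = r' % 2 by omega)]
        rcases Nat.even_or_odd r' with h | h <;>
          simp [h.neg_one_pow, pow_succ, mul_add, mul_sub, mul_neg, neg_mul, mul_one,
            neg_neg, neg_add] <;>
          abel

lemma bridge {N : ℕ} (x : Fin N → A) (l : List (Fin N)) (hs : l.Pairwise (· < ·)) :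
    ∀ r : ℕ,
      ∑ s ∈ Finset.powersetCard r l.toFinset, ((s.sort (· ≤ ·)).map x).prod
        = listE (l.map x) r := by
  induction l with
  | nil =>
    intro r
    cases r with
    | zero => simp
    | succ r =>
      rw [List.toFinset_nil, Finset.powersetCard_eq_empty.mpr (by simp), Finset.sum_empty,
        List.map_nil, listE_nil_succ]
  | cons a l ih =>
    have ha : ∀ b ∈ l, a < b := (List.pairwise_cons.mp hs).1
    have hl : l.Pairwise (· < ·) := (List.pairwise_cons.mp hs).2
    have hna : a ∉ l.toFinset := by
      rw [List.mem_toFinset]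
      intro h
      exact absurd (ha a h) (lt_irrefl a)
    intro r
    cases r with
    | zero => simp
    | succ r =>
      have hdisj : Disjoint (Finset.powersetCard (r+1) l.toFinset)
          (Finset.image (insert a) (Finset.powersetCard r l.toFinset)) := by
        rw [Finset.disjoint_left]
        intro u hu hu'
        obtain ⟨t, ht, rfl⟩ := Finset.mem_image.mp hu'
        have : insert a t ⊆ l.toFinset := (Finset.mem_powersetCard.mp hu).1
        exact hna (this (Finset.mem_insert_self a t))
      have hinj : ∀ u ∈ Finset.powersetCard r l.toFinset,
          ∀ v ∈ Finset.powersetCard r l.toFinset, insert a u = insert a v → u = v := by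
        intro u hu v hv h
        have hau : a ∉ u := fun h' => hna ((Finset.mem_powersetCard.mp hu).1 h')
        have hav : a ∉ v := fun h' => hna ((Finset.mem_powersetCard.mp hv).1 h')
        rw [← Finset.erase_insert hau, ← Finset.erase_insert hav, h]
      have hterm : ∀ t ∈ Finset.powersetCard r l.toFinset,
          (((insert a t).sort (· ≤ ·)).map x).prod = x a * ((t.sort (· ≤ ·)).map x).prod := by
        intro t ht
        have hsub := (Finset.mem_powersetCard.mp ht).1
        have hat : a ∉ t := fun h' => hna (hsub h')
        rw [Finset.sort_insert (· ≤ ·) (fun b hb => le_of_lt (ha b (List.mem_toFinset.mp (hsub hb)))) hat,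
          List.map_cons, List.prod_cons]
      rw [List.toFinset_cons, Finset.powersetCard_succ_insert hna r, Finset.sum_union hdisj,
        Finset.sum_image hinj, Finset.sum_congr rfl hterm, ← Finset.mul_sum, ih hl (r+1),
        ih hl r, List.map_cons, listE_cons, add_comm]


lemma pair_sum (g : ℕ → A) : ∀ M : ℕ,
    (∀ j, 2*j+2 ≤ 2*M → g (2*j+1) + g (2*j+2) = 0) →
    ∑ m ∈ Finset.Icc 1 (2*M), g m = 0
  | 0, _ => by simp
  | (M+1), h => by
    rw [show 2*(M+1) = (2*M+1)+1 from by omega, Finset.sum_Icc_succ_top (by omega) g,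
      Finset.sum_Icc_succ_top (by omega) g,
      pair_sum g M (fun j hj => h j (by omega)), zero_add,
      show (2*M+1+1 : ℕ) = 2*M+2 from by omega]
    exact h M (by omega)

end aux

/-- In `OSym_{n+1}` (the algebra of odd symmetric polynomials, formalized inside any
algebra with `n+1` anticommuting odd variables): for `0 ≤ p, q, k ≤ n` with `p + q ≤ n`,
`∑_{m=1}^{n-p-q} (-1)^{(n+k)(m+p+k)} e_{n-k+m} e_{n-p-q-m}
  = ∑_{m=1}^{n-p-q} (-1)^{(n+k)(m+q)} e_{n-p-q-m} e_{n-k+m}`. -/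
theorem statement16 {A : Type*} [Ring A] (n : ℕ) (x : Fin (n + 1) → A)
    (hx : ∀ i j : Fin (n + 1), i < j → x j * x i = -(x i * x j))
    (p q k : ℕ) (hp : p ≤ n) (hq : q ≤ n) (hk : k ≤ n) (hpq : p + q ≤ n) :
    ∑ m ∈ Finset.Icc 1 (n - p - q),
        (-1 : A) ^ ((n + k) * (m + p + k)) *
          (oddElem x (n - k + m) * oddElem x (n - p - q - m)) =
      ∑ m ∈ Finset.Icc 1 (n - p - q),
        (-1 : A) ^ ((n + k) * (m + q)) *
          (oddElem x (n - p - q - m) * oddElem x (n - k + m)) := by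
  classical
  have hpwl : ((List.finRange (n+1)).map x).Pairwise (fun u v => v * u = -(u * v)) :=
    List.Pairwise.map x (fun a b hab => hx a b hab) (List.pairwise_lt_finRange (n+1))
  have he : ∀ r, oddElem x r = listE ((List.finRange (n+1)).map x) r := by
    intro r
    rw [oddElem, ← List.toFinset_finRange (n+1)]
    exact bridge x _ (List.pairwise_lt_finRange (n+1)) r
  have cA : ∀ r s, r % 2 = s % 2 → oddElem x r * oddElem x s = oddElem x s * oddElem x r := by
    intro r s h; rw [he, he]; exact (listE_rel _ hpwl r s h).1
  have cB : ∀ r s, r % 2 = s % 2 →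
      oddElem x r * oddElem x (s+1) + (-1:A)^r * (oddElem x (s+1) * oddElem x r)
        = (-1:A)^r * (oddElem x (r+1) * oddElem x s) + oddElem x s * oddElem x (r+1) := by
    intro r s h; rw [he, he, he, he]; exact (listE_rel _ hpwl r s h).2
  have e0 : oddElem x 0 = 1 := by rw [he]; simp
  rcases Nat.even_or_odd (n+k) with hnk | hnk <;> rcases Nat.even_or_odd (p+q+k) with hpqk | hpqk
  · -- n+k even, p+q+k even : termwise commutation, signs are 1
    have hh1 : (n+k) % 2 = 0 := Nat.even_iff.mp hnk
    have hh2 : (p+q+k) % 2 = 0 := Nat.even_iff.mp hpqk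
    apply Finset.sum_congr rfl
    intro m hm
    have hm' := Finset.mem_Icc.mp hm
    rw [Even.neg_one_pow (Nat.even_mul.mpr (Or.inl hnk)),
      Even.neg_one_pow (Nat.even_mul.mpr (Or.inl hnk)),
      cA (n-k+m) (n-p-q-m) (by omega)]
  · -- n+k even, p+q+k odd : telescoping, all signs 1
    have hh1 : (n+k) % 2 = 0 := Nat.even_iff.mp hnk
    have hh2 : (p+q+k) % 2 = 1 := Nat.odd_iff.mp hpqk
    obtain ⟨M, hM⟩ : ∃ M, n - p - q = 2*M+1 := ⟨(n-p-q)/2, by omega⟩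
    have key : ∑ m ∈ Finset.Icc 1 (n-p-q),
        (oddElem x (n-k+m) * oddElem x (n-p-q-m)
          - oddElem x (n-p-q-m) * oddElem x (n-k+m)) = 0 := by
      have hpair : ∀ j, 2*j+2 ≤ 2*(M+1) →
          (fun m => oddElem x (n-k+m) * oddElem x (n-p-q-m)
            - oddElem x (n-p-q-m) * oddElem x (n-k+m)) (2*j+1)
          + (fun m => oddElem x (n-k+m) * oddElem x (n-p-q-m)
            - oddElem x (n-p-q-m) * oddElem x (n-k+m)) (2*j+2) = 0 := by
        intro j hj
        dsimp only
        rcases Nat.lt_or_ge (2*j+1) (n-p-q) with hlt | hge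
        · have hcb := cB (n-k+(2*j+1)) (n-p-q-(2*j+1)-1) (by omega)
          rw [Odd.neg_one_pow (Nat.odd_iff.mpr (by omega)), neg_one_mul, neg_one_mul,
            show n-p-q-(2*j+1)-1+1 = n-p-q-(2*j+1) from by omega,
            show n-k+(2*j+1)+1 = n-k+(2*j+2) from by omega,
            show n-p-q-(2*j+1)-1 = n-p-q-(2*j+2) from by omega] at hcb
          have hX1 : oddElem x (n-k+(2*j+1)) * oddElem x (n-p-q-(2*j+1))
              = (-(oddElem x (n-k+(2*j+2)) * oddElem x (n-p-q-(2*j+2)))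
                  + oddElem x (n-p-q-(2*j+2)) * oddElem x (n-k+(2*j+2)))
                - -(oddElem x (n-p-q-(2*j+1)) * oddElem x (n-k+(2*j+1))) :=
            eq_sub_iff_add_eq.mpr hcb
          rw [hX1]
          abel
        · rw [show n-p-q-(2*j+1) = 0 from by omega, show n-p-q-(2*j+2) = 0 from by omega, e0]
          simp
      have hz := pair_sum (fun m => oddElem x (n-k+m) * oddElem x (n-p-q-m)
        - oddElem x (n-p-q-m) * oddElem x (n-k+m)) (M+1) hpair
      rw [show 2*(M+1) = (n-p-q)+1 from by omega,
        Finset.sum_Icc_succ_top (by omega)] at hz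
      rw [show n-p-q-(n-p-q+1) = 0 from by omega, e0, mul_one, one_mul, sub_self,
        add_zero] at hz
      exact hz
    rw [← sub_eq_zero, ← Finset.sum_sub_distrib]
    have trans : ∀ m ∈ Finset.Icc 1 (n-p-q),
        (-1:A)^((n+k)*(m+p+k)) * (oddElem x (n-k+m) * oddElem x (n-p-q-m))
          - (-1:A)^((n+k)*(m+q)) * (oddElem x (n-p-q-m) * oddElem x (n-k+m))
        = oddElem x (n-k+m) * oddElem x (n-p-q-m)
          - oddElem x (n-p-q-m) * oddElem x (n-k+m) := by
      intro m hm
      rw [Even.neg_one_pow (Nat.even_mul.mpr (Or.inl hnk)),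
        Even.neg_one_pow (Nat.even_mul.mpr (Or.inl hnk)), one_mul, one_mul]
    rw [Finset.sum_congr rfl trans]
    exact key
  · -- n+k odd, p+q+k even : termwise, equal signs
    have hh1 : (n+k) % 2 = 1 := Nat.odd_iff.mp hnk
    have hh2 : (p+q+k) % 2 = 0 := Nat.even_iff.mp hpqk
    apply Finset.sum_congr rfl
    intro m hm
    have hm' := Finset.mem_Icc.mp hm
    rw [neg_one_pow_congr_mod (show ((n+k)*(m+p+k)) % 2 = ((n+k)*(m+q)) % 2 from by
      rw [Nat.mul_mod, Nat.mul_mod (n+k) (m+q), hh1]; omega),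
      cA (n-k+m) (n-p-q-m) (by omega)]
  · -- n+k odd, p+q+k odd : telescoping with signs
    have hh1 : (n+k) % 2 = 1 := Nat.odd_iff.mp hnk
    have hh2 : (p+q+k) % 2 = 1 := Nat.odd_iff.mp hpqk
    obtain ⟨M, hM⟩ : ∃ M, n - p - q = 2*M := ⟨(n-p-q)/2, by omega⟩
    have key : ∑ m ∈ Finset.Icc 1 (n-p-q),
        ((-1:A)^m * (oddElem x (n-k+m) * oddElem x (n-p-q-m)
          + oddElem x (n-p-q-m) * oddElem x (n-k+m))) = 0 := by
      rw [hM]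
      apply pair_sum
      intro j hj
      have hcb := cB (n-p-q-(2*j+1)-1) (n-k+(2*j+1)) (by omega)
      rw [Even.neg_one_pow (Nat.even_iff.mpr (by omega)), one_mul, one_mul,
        show n-p-q-(2*j+1)-1+1 = 2*M-(2*j+1) from by omega,
        show n-k+(2*j+1)+1 = n-k+(2*j+2) from by omega,
        show n-p-q-(2*j+1)-1 = 2*M-(2*j+2) from by omega] at hcb
      rw [Odd.neg_one_pow (show Odd (2*j+1) from ⟨j, by omega⟩),
        Even.neg_one_pow (show Even (2*j+2) from ⟨j+1, by omega⟩), neg_one_mul, one_mul]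
      rw [neg_add_eq_zero]
      exact (add_comm _ _).trans (hcb.symm.trans (add_comm _ _))
    rw [← sub_eq_zero, ← Finset.sum_sub_distrib]
    have trans : ∀ m ∈ Finset.Icc 1 (n-p-q),
        (-1:A)^((n+k)*(m+p+k)) * (oddElem x (n-k+m) * oddElem x (n-p-q-m))
          - (-1:A)^((n+k)*(m+q)) * (oddElem x (n-p-q-m) * oddElem x (n-k+m))
        = (-1:A)^(p+k) * ((-1:A)^m * (oddElem x (n-k+m) * oddElem x (n-p-q-m)
            + oddElem x (n-p-q-m) * oddElem x (n-k+m))) := by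
      intro m hm
      have hs1 : (-1:A)^((n+k)*(m+p+k)) = (-1:A)^(p+k) * (-1:A)^m := by
        rw [neg_one_pow_congr_mod (show ((n+k)*(m+p+k)) % 2 = ((p+k)+m) % 2 from by
          rw [Nat.mul_mod, hh1]; omega), pow_add]
      have hs2 : (-1:A)^((n+k)*(m+q)) = -((-1:A)^(p+k) * (-1:A)^m) := by
        rw [neg_one_pow_congr_mod (show ((n+k)*(m+q)) % 2 = (((p+k)+m)+1) % 2 from by
          rw [Nat.mul_mod, hh1]; omega), pow_succ, pow_add, mul_neg_one]
      rw [hs1, hs2]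
      noncomm_ring
    rw [Finset.sum_congr rfl trans, ← Finset.mul_sum, key, mul_zero]
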